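/- Let A ∈ ℝ^{k×d} be a random matrix whose entries are i.i.d. with mean zero, unit variance and fourth moment Δ. Fix x ∈ ℝ^d and let f(x) = (1/√k) A x. Then Var(‖f(x)‖₂²) = (1/k)[(Δ − 3)‖x‖₄⁴ + 2‖x‖₂⁴]. -/

import Mathlib

open MeasureTheory ProbabilityTheory Finset
open scoped ENNReal

section Helpers

variable {Ω : Type*} [MeasurableSpace Ω] {μ : Measure Ω} [IsProbabilityMeasure μ]

lemma aux_int_pow {f : Ω → ℝ} (hf : MemLp f 4 μ) (hmf : Measurable f) {j : ℕ} (hj : j ≤ 4) :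
    Integrable (fun ω => f ω ^ j) μ := by
  have h4 : Integrable (fun ω => ‖f ω‖ ^ (4 : ℝ)) μ :=
    hf.integrable_norm_rpow (by norm_num) (by norm_num)
  refine Integrable.mono' ((integrable_const 1).add h4)
    ((hmf.pow_const j).aestronglyMeasurable) ?_
  filter_upwards with ω
  have hr : ‖f ω‖ ^ (4 : ℝ) = |f ω| ^ (4 : ℕ) := by
    rw [Real.norm_eq_abs, ← Real.rpow_natCast]; norm_num
  rw [Real.norm_eq_abs, abs_pow, Pi.add_apply, hr]
  rcases le_total (|f ω|) 1 with h | h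
  · have : |f ω| ^ j ≤ 1 := pow_le_one₀ (abs_nonneg _) h
    nlinarith [pow_nonneg (abs_nonneg (f ω)) 4]
  · have : |f ω| ^ j ≤ |f ω| ^ 4 := pow_le_pow_right₀ h hj
    linarith

lemma aux_memLp_sq {f : Ω → ℝ} (hf : MemLp f 4 μ) :
    MemLp (fun ω => f ω ^ 2) 2 μ := by
  have heq : (fun ω => f ω ^ 2) = fun ω => ‖f ω‖ ^ (2 : ℝ) := by
    funext ω
    rw [show ((2:ℝ)) = ((2:ℕ):ℝ) by norm_num, Real.rpow_natCast, Real.norm_eq_abs, sq_abs]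
  refine ⟨?_, ?_⟩
  · exact (hf.aestronglyMeasurable.aemeasurable.pow_const 2).aestronglyMeasurable
  · rw [heq, eLpNorm_norm_rpow f (show (0:ℝ) < 2 by norm_num)]
    have : (2 : ℝ≥0∞) * ENNReal.ofReal 2 = 4 := by
      rw [ENNReal.ofReal_ofNat]; norm_num
    rw [this]
    exact ENNReal.rpow_lt_top_of_nonneg (by norm_num) hf.2.ne

variable {ι : Type*} {b : ι → Ω → ℝ} {v : ι → ℝ} {Δ : ℝ}

lemma aux_sum_memLp (hL4 : ∀ s, MemLp (b s) 4 μ) (S : Finset ι) :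
    MemLp (fun ω => ∑ s ∈ S, b s ω) 4 μ := by
  have := memLp_finset_sum' (μ := μ) (p := 4) S (f := b) (fun i _ => hL4 i)
  rwa [Finset.sum_fn] at this

lemma aux_mean_zero (hL4 : ∀ s, MemLp (b s) 4 μ)
    (hm1 : ∀ s, ∫ ω, b s ω ∂μ = 0) (S : Finset ι) :
    ∫ ω, ∑ s ∈ S, b s ω ∂μ = 0 := by
  rw [integral_finset_sum _ fun s _ => (hL4 s).integrable (by norm_num)]
  simp [hm1]

lemma aux_indep_sum (hbmeas : ∀ s, Measurable (b s))
    (hindep : iIndepFun b μ) {S : Finset ι} {s : ι} (hs : s ∉ S) :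
    IndepFun (b s) (fun ω => ∑ t ∈ S, b t ω) μ := by
  have := (hindep.indepFun_finset_sum_of_notMem hbmeas hs).symm
  rwa [Finset.sum_fn] at this

lemma aux_cross (hbmeas : ∀ s, Measurable (b s))
    (hindep : iIndepFun b μ) {S : Finset ι} {s : ι} (hs : s ∉ S)
    (j m : ℕ) :
    ∫ ω, b s ω ^ j * (∑ t ∈ S, b t ω) ^ m ∂μ
      = (∫ ω, b s ω ^ j ∂μ) * ∫ ω, (∑ t ∈ S, b t ω) ^ m ∂μ := by
  have hI : IndepFun (fun ω => b s ω ^ j) (fun ω => (∑ t ∈ S, b t ω) ^ m) μ :=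
    (aux_indep_sum hbmeas hindep hs).comp (measurable_id.pow_const j) (measurable_id.pow_const m)
  exact hI.integral_mul_eq_mul_integral ((hbmeas s).pow_const j).aestronglyMeasurable
    ((Finset.measurable_sum S fun t _ => hbmeas t).pow_const m).aestronglyMeasurable

lemma aux_m2 (hbmeas : ∀ s, Measurable (b s))
    (hindep : iIndepFun b μ)
    (hL4 : ∀ s, MemLp (b s) 4 μ)
    (hm1 : ∀ s, ∫ ω, b s ω ∂μ = 0)
    (hm2 : ∀ s, ∫ ω, b s ω ^ 2 ∂μ = v s) (S : Finset ι) :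
    ∫ ω, (∑ s ∈ S, b s ω) ^ 2 ∂μ = ∑ s ∈ S, v s := by
  classical
  induction S using Finset.induction_on with
  | empty => simp
  | insert _ _ hs =>
    rename_i s S IH
    have hYL4 := aux_sum_memLp (μ := μ) hL4 S
    have hint_b2 : Integrable (fun ω => b s ω ^ 2) μ := aux_int_pow (hL4 s) (hbmeas s) (by norm_num)
    have hint_Y2 : Integrable (fun ω => (∑ t ∈ S, b t ω) ^ 2) μ :=
      aux_int_pow hYL4 (Finset.measurable_sum S fun t _ => hbmeas t) (by norm_num)
    have hint_bY : Integrable (fun ω => b s ω * ∑ t ∈ S, b t ω) μ :=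
      (aux_indep_sum hbmeas hindep hs).integrable_mul ((hL4 s).integrable (by norm_num))
        (hYL4.integrable (by norm_num))
    have hcross : ∫ ω, b s ω * ∑ t ∈ S, b t ω ∂μ = 0 := by
      have h := (aux_indep_sum hbmeas hindep hs).integral_mul_eq_mul_integral
        (hbmeas s).aestronglyMeasurable
        (Finset.measurable_sum S fun t _ => hbmeas t).aestronglyMeasurable
      calc ∫ ω, b s ω * ∑ t ∈ S, b t ω ∂μ
          = integral μ (b s * fun ω => ∑ t ∈ S, b t ω) := rfl
        _ = 0 := by rw [h, hm1 s, zero_mul]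
    have hexp : ∫ ω, (∑ t ∈ insert s S, b t ω) ^ 2 ∂μ
        = ∫ ω, (b s ω ^ 2 + 2 * (b s ω * ∑ t ∈ S, b t ω) + (∑ t ∈ S, b t ω) ^ 2) ∂μ := by
      refine integral_congr_ae (Filter.Eventually.of_forall fun ω => ?_)
      simp only [Finset.sum_insert hs]; ring
    have h1 : Integrable (fun ω => b s ω ^ 2 + 2 * (b s ω * ∑ t ∈ S, b t ω)) μ :=
      hint_b2.add (hint_bY.const_mul 2)
    rw [hexp,
      integral_add h1 hint_Y2,
      integral_add hint_b2 (hint_bY.const_mul 2), integral_const_mul, hcross, hm2 s, IH,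
      Finset.sum_insert hs]
    ring

lemma aux_m4 (hbmeas : ∀ s, Measurable (b s))
    (hindep : iIndepFun b μ)
    (hL4 : ∀ s, MemLp (b s) 4 μ)
    (hm1 : ∀ s, ∫ ω, b s ω ∂μ = 0)
    (hm2 : ∀ s, ∫ ω, b s ω ^ 2 ∂μ = v s)
    (hm4 : ∀ s, ∫ ω, b s ω ^ 4 ∂μ = Δ * v s ^ 2) (S : Finset ι) :
    ∫ ω, (∑ s ∈ S, b s ω) ^ 4 ∂μ
      = Δ * ∑ s ∈ S, v s ^ 2 + 3 * ((∑ s ∈ S, v s) ^ 2 - ∑ s ∈ S, v s ^ 2) := by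
  classical
  induction S using Finset.induction_on with
  | empty => simp
  | insert _ _ hs =>
    rename_i s S IH
    have hYmeas : Measurable (fun ω => ∑ t ∈ S, b t ω) := Finset.measurable_sum S fun t _ => hbmeas t
    have hYL4 := aux_sum_memLp (μ := μ) hL4 S
    have hint_bj : ∀ j, j ≤ 4 → Integrable (fun ω => b s ω ^ j) μ :=
      fun j hj => aux_int_pow (hL4 s) (hbmeas s) hj
    have hint_Yj : ∀ j, j ≤ 4 → Integrable (fun ω => (∑ t ∈ S, b t ω) ^ j) μ :=
      fun j hj => aux_int_pow hYL4 hYmeas hj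
    have hIndjm : ∀ j m : ℕ, IndepFun (fun ω => b s ω ^ j) (fun ω => (∑ t ∈ S, b t ω) ^ m) μ :=
      fun j m => (aux_indep_sum hbmeas hindep hs).comp (measurable_id.pow_const j)
        (measurable_id.pow_const m)
    have hint_jm : ∀ j m : ℕ, j ≤ 4 → m ≤ 4 →
        Integrable (fun ω => b s ω ^ j * (∑ t ∈ S, b t ω) ^ m) μ :=
      fun j m hj hm => (hIndjm j m).integrable_mul (hint_bj j hj) (hint_Yj m hm)
    have hmean : ∫ ω, ∑ t ∈ S, b t ω ∂μ = 0 := aux_mean_zero hL4 hm1 S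
    have hc31 : ∫ ω, b s ω ^ 3 * (∑ t ∈ S, b t ω) ^ 1 ∂μ = 0 := by
      rw [aux_cross hbmeas hindep hs 3 1]
      simp [hmean]
    have hc13 : ∫ ω, b s ω ^ 1 * (∑ t ∈ S, b t ω) ^ 3 ∂μ = 0 := by
      rw [aux_cross hbmeas hindep hs 1 3]
      simp [hm1 s]
    have hc22 : ∫ ω, b s ω ^ 2 * (∑ t ∈ S, b t ω) ^ 2 ∂μ = v s * ∑ t ∈ S, v t := by
      rw [aux_cross hbmeas hindep hs 2 2, hm2 s, aux_m2 hbmeas hindep hL4 hm1 hm2 S]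
    have hexp : ∫ ω, (∑ t ∈ insert s S, b t ω) ^ 4 ∂μ
        = ∫ ω, (b s ω ^ 4 + 4 * (b s ω ^ 3 * (∑ t ∈ S, b t ω) ^ 1)
          + 6 * (b s ω ^ 2 * (∑ t ∈ S, b t ω) ^ 2)
          + 4 * (b s ω ^ 1 * (∑ t ∈ S, b t ω) ^ 3) + (∑ t ∈ S, b t ω) ^ 4) ∂μ := by
      refine integral_congr_ae (Filter.Eventually.of_forall fun ω => ?_)
      simp only [Finset.sum_insert hs]; ring
    rw [hexp]
    have hA1 : Integrable (fun ω => b s ω ^ 4 + 4 * (b s ω ^ 3 * (∑ t ∈ S, b t ω) ^ 1)) μ :=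
      (hint_bj 4 le_rfl).add ((hint_jm 3 1 (by norm_num) (by norm_num)).const_mul 4)
    have hA2 : Integrable (fun ω => b s ω ^ 4 + 4 * (b s ω ^ 3 * (∑ t ∈ S, b t ω) ^ 1)
        + 6 * (b s ω ^ 2 * (∑ t ∈ S, b t ω) ^ 2)) μ :=
      hA1.add ((hint_jm 2 2 (by norm_num) (by norm_num)).const_mul 6)
    have hA3 : Integrable (fun ω => b s ω ^ 4 + 4 * (b s ω ^ 3 * (∑ t ∈ S, b t ω) ^ 1)
        + 6 * (b s ω ^ 2 * (∑ t ∈ S, b t ω) ^ 2)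
        + 4 * (b s ω ^ 1 * (∑ t ∈ S, b t ω) ^ 3)) μ :=
      hA2.add ((hint_jm 1 3 (by norm_num) (by norm_num)).const_mul 4)
    rw [integral_add hA3 (hint_Yj 4 le_rfl),
      integral_add hA2 ((hint_jm 1 3 (by norm_num) (by norm_num)).const_mul 4),
      integral_add hA1 ((hint_jm 2 2 (by norm_num) (by norm_num)).const_mul 6),
      integral_add (hint_bj 4 le_rfl) ((hint_jm 3 1 (by norm_num) (by norm_num)).const_mul 4),
      integral_const_mul, integral_const_mul, integral_const_mul,
      hc31, hc13, hc22, hm4 s, IH, Finset.sum_insert hs, Finset.sum_insert hs]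
    ring

end Helpers

/-- variance of the squared norm of `f(x) = (1/√k) A x`, for `A` with
i.i.d. mean-zero unit-variance entries with fourth moment `Δ`:
`Var(‖f(x)‖₂²) = (1/k) [(Δ − 3) ‖x‖₄⁴ + 2 ‖x‖₂⁴]`. -/
theorem stmt5 {Ω : Type*} [MeasurableSpace Ω] (μ : Measure Ω) [IsProbabilityMeasure μ]
    {k d : ℕ} (hk : 0 < k) (Δ : ℝ)
    (A : Ω → Fin k → Fin d → ℝ)
    (hmeas : ∀ i j, Measurable fun ω => A ω i j)
    (hindep : iIndepFun
        (fun (p : Fin k × Fin d) (ω : Ω) => A ω p.1 p.2) μ)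
    (hident : ∀ p q : Fin k × Fin d,
        IdentDistrib (fun ω => A ω p.1 p.2) (fun ω => A ω q.1 q.2) μ μ)
    (hL4 : ∀ i j, MemLp (fun ω => A ω i j) 4 μ)
    (hmean : ∀ i j, ∫ ω, A ω i j ∂μ = 0)
    (hvar : ∀ i j, ∫ ω, (A ω i j) ^ 2 ∂μ = 1)
    (h4 : ∀ i j, ∫ ω, (A ω i j) ^ 4 ∂μ = Δ)
    (x : Fin d → ℝ) :
    variance (fun ω => ∑ i : Fin k, ((1 / Real.sqrt k) * ∑ s : Fin d, A ω i s * x s) ^ 2) μ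
      = (1 / k) * ((Δ - 3) * ∑ s : Fin d, (x s) ^ 4 + 2 * (∑ s : Fin d, (x s) ^ 2) ^ 2) := by
  classical
  set b : Fin k × Fin d → Ω → ℝ := fun p ω => x p.2 * A ω p.1 p.2 with hb
  set v : Fin k × Fin d → ℝ := fun p => x p.2 ^ 2 with hv
  have hbmeas : ∀ p, Measurable (b p) := fun p => (hmeas p.1 p.2).const_mul _
  have hbindep : iIndepFun b μ :=
    hindep.comp (fun p z => x p.2 * z) (fun p => measurable_const_mul _)
  have hbL4 : ∀ p, MemLp (b p) 4 μ := fun p => (hL4 p.1 p.2).const_mul _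
  have hbm1 : ∀ p, ∫ ω, b p ω ∂μ = 0 := by
    intro p; simp only [hb]; rw [integral_const_mul, hmean p.1 p.2, mul_zero]
  have hbm2 : ∀ p, ∫ ω, b p ω ^ 2 ∂μ = v p := by
    intro p; simp only [hb, mul_pow]
    rw [integral_const_mul, hvar p.1 p.2, mul_one]
  have hbm4 : ∀ p, ∫ ω, b p ω ^ 4 ∂μ = Δ * v p ^ 2 := by
    intro p; simp only [hb, mul_pow]
    rw [integral_const_mul, h4 p.1 p.2, hv]
    ring
  set S : Fin k → Finset (Fin k × Fin d) := fun i => {i} ×ˢ Finset.univ with hS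
  have hsum : ∀ i ω, ∑ p ∈ S i, b p ω = ∑ s : Fin d, A ω i s * x s := by
    intro i ω
    rw [hS, Finset.sum_product, Finset.sum_singleton]
    exact Finset.sum_congr rfl fun s _ => mul_comm _ _
  set Z : Fin k → Ω → ℝ := fun i ω => (∑ p ∈ S i, b p ω) ^ 2 with hZ
  -- rewrite the target function
  have hksq : ((1 : ℝ) / Real.sqrt k) ^ 2 = 1 / k := by
    rw [div_pow, one_pow, Real.sq_sqrt (Nat.cast_nonneg k)]
  have hfun : (fun ω => ∑ i : Fin k, ((1 / Real.sqrt k) * ∑ s : Fin d, A ω i s * x s) ^ 2)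
      = fun ω => (1 / (k : ℝ)) * ∑ i : Fin k, Z i ω := by
    funext ω
    rw [Finset.mul_sum]
    refine Finset.sum_congr rfl fun i _ => ?_
    simp only [hZ]
    rw [mul_pow, hksq, ← hsum i ω]
  rw [hfun, variance_const_mul]
  -- variance of the sum
  have hZL2 : ∀ i, MemLp (Z i) 2 μ := fun i => aux_memLp_sq (aux_sum_memLp hbL4 (S i))
  have hZsum : variance (fun ω => ∑ i : Fin k, Z i ω) μ = ∑ i : Fin k, variance (Z i) μ := by
    rw [← Finset.sum_fn]
    refine IndepFun.variance_sum (fun i _ => hZL2 i) ?_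
    intro i _ j _ hij
    have hdisj : Disjoint (S i) (S j) := by
      rw [Finset.disjoint_left]
      intro p hpi hpj
      rw [hS] at hpi hpj
      rw [Finset.mem_product, Finset.mem_singleton] at hpi hpj
      exact hij (hpi.1.symm.trans hpj.1)
    have hbase := hbindep.indepFun_finset (S i) (S j) hdisj hbmeas
    have hφ : ∀ l : Fin k, Measurable (fun w : ↥(S l) → ℝ => (∑ p, w p) ^ 2) :=
      fun l => (Finset.measurable_sum Finset.univ fun p _ => measurable_pi_apply p).pow_const 2
    have h := hbase.comp (hφ i) (hφ j)
    have heq : ∀ l : Fin k, ((fun w : ↥(S l) → ℝ => (∑ p, w p) ^ 2)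
        ∘ fun a (p : ↥(S l)) => b p a) = Z l := by
      intro l; funext a
      simp only [Function.comp_apply, hZ]
      rw [Finset.sum_coe_sort (S l) (fun p => b p a)]
    rw [heq i, heq j] at h
    exact h
  rw [hZsum]
  have hvarZ : ∀ i, variance (Z i) μ
      = (Δ - 3) * (∑ s : Fin d, x s ^ 4) + 2 * (∑ s : Fin d, x s ^ 2) ^ 2 := by
    intro i
    rw [variance_eq_sub (hZL2 i)]
    have h1 : μ[(Z i) ^ 2] = ∫ ω, (∑ p ∈ S i, b p ω) ^ 4 ∂μ := by
      refine integral_congr_ae (Filter.Eventually.of_forall fun ω => ?_)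
      simp only [Pi.pow_apply, hZ]
      ring
    have h2 : μ[Z i] = ∫ ω, (∑ p ∈ S i, b p ω) ^ 2 ∂μ := rfl
    rw [h1, h2, aux_m4 hbmeas hbindep hbL4 hbm1 hbm2 hbm4 (S i),
      aux_m2 hbmeas hbindep hbL4 hbm1 hbm2 (S i)]
    have hv2 : ∑ p ∈ S i, v p = ∑ s : Fin d, x s ^ 2 := by
      rw [hS, Finset.sum_product, Finset.sum_singleton]
    have hv4 : ∑ p ∈ S i, v p ^ 2 = ∑ s : Fin d, x s ^ 4 := by
      rw [hS, Finset.sum_product, Finset.sum_singleton]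
      refine Finset.sum_congr rfl fun s _ => ?_
      simp only [hv]; ring
    rw [hv2, hv4]
    ring
  simp only [hvarZ]
  rw [Finset.sum_const, Finset.card_univ, Fintype.card_fin, nsmul_eq_mul]
  have hkne : (k : ℝ) ≠ 0 := Nat.cast_ne_zero.mpr hk.ne'
  field_simp
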